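/- For any nonzero vectors u, v in ℝ^n, the following two-sided bound holds: ⟨u, v/‖v‖⟩ ≤ ‖u + v‖ - ‖v‖ ≤ ⟨u, v/‖v‖⟩ + (1/2)·‖u‖³/√(‖u‖²‖v‖² - ⟨u,v⟩²), where the upper bound is interpreted as +∞ (or the claim restricted to the case) when u and v are linearly dependent. -/

import Mathlib

open MeasureTheory Matrix Real
notation "⟪" x ", " y "⟫_ℝ" => @inner ℝ _ _ x y

noncomputable def frobNorm {d : ℕ} (A : Matrix (Fin d) (Fin d) ℝ) : ℝ :=
  Real.sqrt (∑ i, ∑ j, A i j ^ 2)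

noncomputable def nuclearNorm {d : ℕ} (A : Matrix (Fin d) (Fin d) ℝ) : ℝ :=
  ∑ i, Real.sqrt ((show (Aᵀ * A).IsHermitian by
    simpa using Matrix.isHermitian_conjTranspose_mul_self A).eigenvalues i)

/-- `μ` is the uniform (rotation-invariant) probability distribution on the unit
sphere `S^{d-1} ⊂ ℝ^d`. -/
def IsUniformOnSphere {d : ℕ} (μ : Measure (EuclideanSpace ℝ (Fin d))) : Prop :=
  IsProbabilityMeasure μ ∧ (∀ᵐ x ∂μ, ‖x‖ = 1) ∧
  ∀ Q : Matrix (Fin d) (Fin d) ℝ, Qᵀ * Q = 1 →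
    Measure.map (fun x => Matrix.toEuclideanLin Q x) μ = μ

/-- The Beta function. -/
noncomputable def Beta (m n : ℝ) : ℝ := Real.Gamma m * Real.Gamma n / Real.Gamma (m + n)

noncomputable def ptilde (d : ℕ) : ℝ :=
  (1 + Beta ((d : ℝ) - 1) (1/2) / Beta (((d : ℝ) - 1)/2) (1/2))⁻¹

def A2 : Matrix (Fin 2) (Fin 2) ℝ := !![0, -1; 1, 0]

noncomputable def rot2 (θ : ℝ) : Matrix (Fin 2) (Fin 2) ℝ :=
  !![Real.cos θ, -Real.sin θ; Real.sin θ, Real.cos θ]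

lemma key_ineq (b w s m : ℝ) (hb : 0 < b) (hw : 0 < w) (hm0 : 0 ≤ m)
    (hm : m^2 = s^2 + w^2) :
    Real.sqrt ((b+s)^2 + w^2) ≤ b + s + m^3 / (2*w*b) := by
  have hwm : w ≤ m := by nlinarith [sq_nonneg s]
  have hmpos : 0 < m := lt_of_lt_of_le hw hwm
  have hs : -m ≤ s := by nlinarith [sq_nonneg w]
  set K := m^3 / (2*w*b) with hK
  have hKge : m^2/(2*b) ≤ K := by
    rw [hK]
    rw [div_le_div_iff₀ (by positivity) (by positivity)]
    nlinarith [mul_nonneg (mul_nonneg hb.le (sq_nonneg m)) (sub_nonneg.mpr hwm)]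
  have hpos : 0 ≤ b + s + K := by
    have : ((b-m)^2 + b^2)/(2*b) ≤ b - m + K := by
      have h1 : ((b-m)^2+b^2)/(2*b) = b - m + m^2/(2*b) := by field_simp; ring
      linarith
    have h2 : 0 ≤ ((b-m)^2+b^2)/(2*b) := by positivity
    linarith
  have h4 : 4*w^4*b^2 ≤ 4*m^3*w*b*(b+s) + m^6 := by
    rcases le_or_gt 0 s with hs0 | hs0
    · have h1 : w^3 ≤ m^3 := pow_le_pow_left₀ hw.le hwm 3
      nlinarith [mul_nonneg (mul_nonneg hw.le (sq_nonneg b)) (sub_nonneg.mpr h1),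
        mul_nonneg (mul_nonneg (mul_pos hw hb).le hs0) (pow_pos hmpos 3).le,
        pow_pos hmpos 6]
    · have hwm' : w < m := by nlinarith [sq_nonneg s]
      have hA : 0 < 4*w*(m^3-w^3) := by
        have h2 : w^3 < m^3 := pow_lt_pow_left₀ hwm' hw.le (by norm_num)
        nlinarith
      have hAf : 0 ≤ (4*w*(m^3-w^3)) * (4*m^3*w*b*(b+s) + m^6 - 4*w^4*b^2) := by
        nlinarith [sq_nonneg (4*w*(m^3-w^3)*b + 2*m^3*w*s),
          mul_nonneg (mul_nonneg (pow_nonneg hm0 8) hw.le) (sub_nonneg.mpr hwm),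
          mul_nonneg (pow_nonneg hm0 6) (sq_nonneg w), sq_nonneg (m-w)]
      nlinarith [mul_pos hA (by linarith : (0:ℝ) < 1)]
  have hdiff : 2*K*(b+s) + K^2 - w^2 = (4*m^3*w*b*(b+s) + m^6 - 4*w^4*b^2)/(4*w^2*b^2) := by
    rw [hK]; field_simp; ring
  have hd : 0 ≤ 2*K*(b+s) + K^2 - w^2 := by
    rw [hdiff]; apply div_nonneg (by linarith) (by positivity)
  have hsq : (b+s)^2 + w^2 ≤ (b+s+K)^2 := by nlinarith
  calc Real.sqrt ((b+s)^2 + w^2) ≤ Real.sqrt ((b+s+K)^2) := Real.sqrt_le_sqrt hsq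
    _ = b+s+K := Real.sqrt_sq hpos

theorem stmt0 {n : ℕ} (u v : EuclideanSpace ℝ (Fin n)) (hu : u ≠ 0) (hv : v ≠ 0)
    (hind : LinearIndependent ℝ ![u, v]) :
    ⟪u, ‖v‖⁻¹ • v⟫_ℝ ≤ ‖u + v‖ - ‖v‖ ∧
    ‖u + v‖ - ‖v‖ ≤ ⟪u, ‖v‖⁻¹ • v⟫_ℝ
      + (1/2) * ‖u‖^3 / Real.sqrt (‖u‖^2 * ‖v‖^2 - ⟪u, v⟫_ℝ^2) := by
  have hb : (0:ℝ) < ‖v‖ := norm_pos_iff.mpr hv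
  have hum : (0:ℝ) < ‖u‖ := norm_pos_iff.mpr hu
  set b := ‖v‖ with hbdef
  set m := ‖u‖ with hmdef
  set p := ⟪u, v⟫_ℝ with hpdef
  have hpair := LinearIndependent.pair_iff.mp hind
  have h1 : p < m * b := by
    apply inner_lt_norm_mul_iff_real.mpr
    intro h
    have h0 : b • u + (-m) • v = 0 := by rw [neg_smul, ← h]; abel
    exact hb.ne' (hpair b (-m) h0).1
  have h2 : -(m*b) < p := by
    have : ⟪-u, v⟫_ℝ < ‖-u‖ * ‖v‖ := by
      apply inner_lt_norm_mul_iff_real.mpr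
      intro h
      rw [norm_neg] at h
      have h0 : b • u + m • v = 0 := by
        have h3 : -(b • u) = m • v := by rw [← h, smul_neg]
        rw [← h3]; abel
      exact hb.ne' (hpair b m h0).1
    rw [norm_neg, inner_neg_left] at this
    simpa using by linarith [this]
  have hD : 0 < m^2 * b^2 - p^2 := by nlinarith
  set D := m^2 * b^2 - p^2 with hDdef
  have hsD : 0 < Real.sqrt D := Real.sqrt_pos.mpr hD
  have hDsq : (Real.sqrt D)^2 = D := Real.sq_sqrt hD.le
  set s := p / b with hsdef
  set w := Real.sqrt D / b with hwdef
  have hw : 0 < w := div_pos hsD hb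
  have hwb : w * b = Real.sqrt D := div_mul_cancel₀ _ hb.ne'
  have hbs : b * s = p := by rw [hsdef]; field_simp
  have hm : m^2 = s^2 + w^2 := by
    rw [hsdef, hwdef, div_pow, div_pow, hDsq, hDdef]
    field_simp
    ring
  have hinner : ⟪u, ‖v‖⁻¹ • v⟫_ℝ = s := by
    rw [real_inner_smul_right, hsdef, ← hpdef, ← hbdef]
    ring
  have hnormsq : ‖u + v‖^2 = (b+s)^2 + w^2 := by
    have H : ‖u + v‖^2 = m^2 + 2*p + b^2 := by
      rw [norm_add_sq_real]
    linear_combination H + hm - 2*hbs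
  have hnorm : ‖u + v‖ = Real.sqrt ((b+s)^2 + w^2) := by
    rw [← hnormsq, Real.sqrt_sq (norm_nonneg _)]
  constructor
  · rw [hinner, hsdef, div_le_iff₀ hb]
    have hc : ⟪u+v, v⟫_ℝ ≤ ‖u+v‖ * ‖v‖ := real_inner_le_norm _ _
    have he : ⟪u+v, v⟫_ℝ = p + b^2 := by
      rw [inner_add_left, ← hpdef, real_inner_self_eq_norm_sq, ← hbdef]
    rw [he] at hc
    nlinarith
  · have hkey := key_ineq b w s m hb hw hum.le hm
    rw [hnorm, hinner]
    have : m^3 / (2*w*b) = 1/2 * m^3 / Real.sqrt D := by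
      rw [mul_assoc, hwb]; field_simp
    linarith [hkey, this ▸ hkey]
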